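/- Let Λ ⊂ ℝⁿ be an arbitrary set and g ∈ ℝ[x₁,…,xₙ]. Define f₂ : ℝ^{n+1} → ℝ^{n+1} by f₂(x, x_{n+1}) = (x, x_{n+1}(1 + x_{n+1}²·g(x))(g(x)² + (x_{n+1}−1)²)). Then f₂(ℝ^{n+1} \ (Λ × {0})) = ℝ^{n+1} \ ((Λ ∩ {g > 0}) × {0}). -/

import Mathlib

open MvPolynomial

private lemma phi_surj (c : ℝ) :
    Function.Surjective (fun t : ℝ => t * (1 + t ^ 2 * c) * (c ^ 2 + (t - 1) ^ 2)) := by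
  have hcont : Continuous (fun t : ℝ => t * (1 + t ^ 2 * c) * (c ^ 2 + (t - 1) ^ 2)) := by
    continuity
  rcases le_or_gt 0 c with hc | hc
  · refine hcont.surjective ?_ ?_
    · refine Filter.tendsto_atTop_mono' _ ?_ Filter.tendsto_id
      filter_upwards [Filter.eventually_ge_atTop (2 : ℝ)] with t ht
      have h1 : (1 : ℝ) ≤ 1 + t ^ 2 * c := by nlinarith
      have h2 : (1 : ℝ) ≤ c ^ 2 + (t - 1) ^ 2 := by nlinarith
      have s1 : t ≤ t * (1 + t ^ 2 * c) := le_mul_of_one_le_right (by linarith) h1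
      have s2 : t * (1 + t ^ 2 * c) ≤ t * (1 + t ^ 2 * c) * (c ^ 2 + (t - 1) ^ 2) :=
        le_mul_of_one_le_right (by linarith) h2
      exact le_trans s1 s2
    · refine Filter.tendsto_atBot_mono' _ ?_ Filter.tendsto_id
      filter_upwards [Filter.eventually_le_atBot (-1 : ℝ)] with t ht
      have h1 : (1 : ℝ) ≤ 1 + t ^ 2 * c := by nlinarith
      have h2 : (1 : ℝ) ≤ c ^ 2 + (t - 1) ^ 2 := by nlinarith
      have s1 : t * (1 + t ^ 2 * c) ≤ t := by nlinarith
      have s2 : t * (1 + t ^ 2 * c) * (c ^ 2 + (t - 1) ^ 2) ≤ t * (1 + t ^ 2 * c) := by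
        nlinarith
      exact le_trans s2 s1
  · have hc' : (0:ℝ) < -c := neg_pos.mpr hc
    have hq : (0:ℝ) ≤ 2 / (-c) := le_of_lt (div_pos two_pos hc')
    refine hcont.surjective' ?_ ?_
    · -- tendsto atBot atTop
      refine Filter.tendsto_atTop_mono' _ ?_ Filter.tendsto_neg_atBot_atTop
      filter_upwards [Filter.eventually_le_atBot (-(max 2 (Real.sqrt (2 / (-c))))) ] with t ht
      have ht2 : t ≤ -2 := le_trans ht (by simp [le_max_left])
      have h0 : Real.sqrt (2 / (-c)) ≤ -t := by
        have := le_max_right 2 (Real.sqrt (2 / (-c)))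
        linarith
      have hsq : 2 / (-c) ≤ t ^ 2 := by
        have h := Real.sq_sqrt hq
        nlinarith [Real.sqrt_nonneg (2 / (-c))]
      have hA : 1 + t ^ 2 * c ≤ -1 := by
        have h2 : 2 ≤ t ^ 2 * (-c) := by
          rw [div_le_iff₀ hc'] at hsq
          linarith
        nlinarith
      have hB : (1 : ℝ) ≤ c ^ 2 + (t - 1) ^ 2 := by nlinarith
      have s1 : -t ≤ t * (1 + t ^ 2 * c) := by nlinarith
      have s2 : t * (1 + t ^ 2 * c) ≤ t * (1 + t ^ 2 * c) * (c ^ 2 + (t - 1) ^ 2) :=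
        le_mul_of_one_le_right (by linarith) hB
      exact le_trans s1 s2
    · -- tendsto atTop atBot
      refine Filter.tendsto_atBot_mono' _ ?_ Filter.tendsto_neg_atTop_atBot
      filter_upwards [Filter.eventually_ge_atTop (max 2 (Real.sqrt (2 / (-c)))) ] with t ht
      have ht2 : (2 : ℝ) ≤ t := le_trans (le_max_left _ _) ht
      have h0 : Real.sqrt (2 / (-c)) ≤ t := le_trans (le_max_right _ _) ht
      have hsq : 2 / (-c) ≤ t ^ 2 := by
        have h := Real.sq_sqrt hq
        nlinarith [Real.sqrt_nonneg (2 / (-c))]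
      have hA : 1 + t ^ 2 * c ≤ -1 := by
        have h2 : 2 ≤ t ^ 2 * (-c) := by
          rw [div_le_iff₀ hc'] at hsq
          linarith
        nlinarith
      have hB : (1 : ℝ) ≤ c ^ 2 + (t - 1) ^ 2 := by nlinarith
      have s1 : t * (1 + t ^ 2 * c) ≤ -t := by nlinarith
      have s2 : t * (1 + t ^ 2 * c) * (c ^ 2 + (t - 1) ^ 2) ≤ t * (1 + t ^ 2 * c) := by
        nlinarith
      exact le_trans s2 s1

private lemma phi_cover (c s : ℝ) (hs : ¬ (0 < c ∧ s = 0)) :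
    ∃ t : ℝ, t ≠ 0 ∧ t * (1 + t ^ 2 * c) * (c ^ 2 + (t - 1) ^ 2) = s := by
  by_cases hs0 : s = 0
  · subst hs0
    have hgle : c ≤ 0 := by
      by_contra h
      exact hs ⟨lt_of_not_ge h, rfl⟩
    rcases lt_or_eq_of_le hgle with hlt | heq
    · have hc' : (0:ℝ) < -c := neg_pos.mpr hlt
      have hpos : (0:ℝ) < 1 / (-c) := div_pos one_pos hc'
      refine ⟨Real.sqrt (1 / (-c)), ne_of_gt (Real.sqrt_pos.mpr hpos), ?_⟩
      have hsq : (Real.sqrt (1 / (-c))) ^ 2 = 1 / (-c) := Real.sq_sqrt (le_of_lt hpos)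
      rw [hsq]
      have : 1 + 1 / (-c) * c = 0 := by rw [div_mul_eq_mul_div, one_mul, div_neg, div_self (ne_of_lt hlt)]; ring
      rw [this, mul_zero, zero_mul]
    · exact ⟨1, one_ne_zero, by subst heq; norm_num⟩
  · obtain ⟨t, ht⟩ := phi_surj c s
    refine ⟨t, ?_, ht⟩
    intro h0
    apply hs0
    rw [← ht, h0]
    ring

/-- f₂(x, x_{n+1}) = (x, x_{n+1}(1 + x_{n+1}²g(x))(g(x)² + (x_{n+1}−1)²)) maps
ℝ^{n+1} \ (Λ×{0}) onto ℝ^{n+1} \ ((Λ ∩ {g > 0})×{0}). -/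
theorem stmt_4 (n : ℕ) (Λ : Set (Fin n → ℝ)) (g : MvPolynomial (Fin n) ℝ) :
    (fun p : (Fin n → ℝ) × ℝ =>
        (p.1, p.2 * (1 + p.2 ^ 2 * eval p.1 g) * ((eval p.1 g) ^ 2 + (p.2 - 1) ^ 2))) ''
        ({p : (Fin n → ℝ) × ℝ | p.1 ∈ Λ ∧ p.2 = 0}ᶜ)
      = {p : (Fin n → ℝ) × ℝ | p.1 ∈ Λ ∧ 0 < eval p.1 g ∧ p.2 = 0}ᶜ := by
  apply Set.eq_of_subset_of_subset
  · rintro p ⟨⟨b, t⟩, hmem, rfl⟩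
    rintro ⟨hΛ, hg, h0⟩
    simp only [Set.mem_compl_iff, Set.mem_setOf_eq] at hmem hΛ hg h0 ⊢
    have ht : t ≠ 0 := fun h => hmem ⟨hΛ, h⟩
    have h1 : 1 + t ^ 2 * eval b g ≠ 0 := by positivity
    have h2 : (eval b g) ^ 2 + (t - 1) ^ 2 ≠ 0 := by positivity
    exact (mul_ne_zero (mul_ne_zero ht h1) h2) h0
  · rintro ⟨a, s⟩ hp
    simp only [Set.mem_compl_iff, Set.mem_setOf_eq, not_and] at hp
    by_cases haΛ : a ∈ Λ
    · obtain ⟨t, ht0, ht⟩ := phi_cover (eval a g) s (fun ⟨h1, h2⟩ => hp haΛ h1 h2)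
      exact ⟨(a, t), fun h => ht0 h.2, by simp [ht]⟩
    · obtain ⟨t, ht⟩ := phi_surj (eval a g) s
      exact ⟨(a, t), fun h => haΛ h.1, by simp [ht]⟩
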